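/- arXiv:2006.05418 — 2 statements merged into one kernel-verified Lean document; each statement's English description precedes it below -/
import Mathlib

section
/- Let X = (X₁,…,Xₙ) be a complex random vector with independent coordinates such that each symmetrization X̃ᵢ satisfies P(b ≤ |X̃ᵢ| ≤ b⁻¹) ≥ b for a fixed b ∈ (0,1). Let v ∈ ℂⁿ and suppose θ ∈ ℂ satisfies |θ| ≤ (b/10)·‖v‖∞⁻¹. Then E[dist²(θ (v ⋆ X̃), (ℤ+iℤ)ⁿ)] ≥ b³ |θ|² ‖v‖₂², where v ⋆ X̃ denotes the coordinatewise (Hadamard) product and dist is Euclidean distance from the point (θv₁X̃₁,…,θvₙX̃ₙ) ∈ ℂⁿ to the Gaussian integer lattice (ℤ+iℤ)ⁿ. -/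
open MeasureTheory ProbabilityTheory

/-- Squared Euclidean distance from `w ∈ ℂ` to the Gaussian integers `ℤ + iℤ`. -/
noncomputable def gaussianLatticeDistSq (w : ℂ) : ℝ :=
  (w.re - round w.re) ^ 2 + (w.im - round w.im) ^ 2

lemma gaussianLatticeDistSq_nonneg (w : ℂ) : 0 ≤ gaussianLatticeDistSq w := by
  unfold gaussianLatticeDistSq; positivity

lemma gaussianLatticeDistSq_le (w : ℂ) : gaussianLatticeDistSq w ≤ 1 / 2 := by
  have h1 := abs_sub_round w.re
  have h2 := abs_sub_round w.im
  have h1' : (w.re - round w.re) ^ 2 ≤ (1 / 2 : ℝ) ^ 2 := by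
    rw [← sq_abs (w.re - round w.re)]; gcongr
  have h2' : (w.im - round w.im) ^ 2 ≤ (1 / 2 : ℝ) ^ 2 := by
    rw [← sq_abs (w.im - round w.im)]; gcongr
  unfold gaussianLatticeDistSq; nlinarith

lemma gaussianLatticeDistSq_eq_of_small {w : ℂ} (hw : ‖w‖ < 1 / 2) :
    gaussianLatticeDistSq w = ‖w‖ ^ 2 := by
  have hre : |w.re| < 1 / 2 := lt_of_le_of_lt (Complex.abs_re_le_norm w) hw
  have him : |w.im| < 1 / 2 := lt_of_le_of_lt (Complex.abs_im_le_norm w) hw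
  have h1 : round w.re = 0 := by
    rw [round_eq_zero_iff]
    constructor
    · linarith [neg_abs_le w.re]
    · linarith [le_abs_self w.re]
  have h2 : round w.im = 0 := by
    rw [round_eq_zero_iff]
    constructor
    · linarith [neg_abs_le w.im]
    · linarith [le_abs_self w.im]
  have hn : ‖w‖ ^ 2 = w.re ^ 2 + w.im ^ 2 := by
    rw [Complex.sq_norm, Complex.normSq_apply]; ring
  unfold gaussianLatticeDistSq
  rw [h1, h2, hn]
  push_cast
  ring

lemma measurable_round_real : Measurable (round : ℝ → ℤ) := by
  have : (round : ℝ → ℤ) = fun x => ⌊x + 1 / 2⌋ := funext fun x => round_eq x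
  rw [this]
  exact Int.measurable_floor.comp (measurable_id.add_const _)

lemma measurable_gaussianLatticeDistSq : Measurable gaussianLatticeDistSq := by
  unfold gaussianLatticeDistSq
  have hre : Measurable fun w : ℂ => w.re := Complex.measurable_re
  have him : Measurable fun w : ℂ => w.im := Complex.measurable_im
  exact ((hre.sub (measurable_from_top.comp (measurable_round_real.comp hre))).pow_const 2).add
    ((him.sub (measurable_from_top.comp (measurable_round_real.comp him))).pow_const 2)

/-- Let `X` have independent coordinates whose symmetrizations `X̃ᵢ = X'ᵢ - X''ᵢ`
satisfy `P(b ≤ |X̃ᵢ| ≤ b⁻¹) ≥ b`. If `|θ| ≤ (b/10)·‖v‖∞⁻¹` (i.e. `|θ||vᵢ| ≤ b/10`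
for every `i`), then `E[dist²(θ (v ⋆ X̃), (ℤ+iℤ)ⁿ)] ≥ b³ |θ|² ‖v‖₂²`. -/
theorem lattice_dist_sq_lower_bound_vector
    {Ω : Type*} [MeasurableSpace Ω] (μ : Measure Ω) [IsProbabilityMeasure μ]
    (n : ℕ) (X X' X'' : Ω → Fin n → ℂ)
    (hX : Measurable X) (hX' : Measurable X') (hX'' : Measurable X'')
    (hcoord : iIndepFun (fun i ω => X ω i) μ)
    (hlaw' : Measure.map X' μ = Measure.map X μ)
    (hlaw'' : Measure.map X'' μ = Measure.map X μ)
    (hind : IndepFun X' X'' μ)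
    (b : ℝ) (hb : b ∈ Set.Ioo (0 : ℝ) 1)
    (hanti : ∀ i, ENNReal.ofReal b ≤
      μ {ω | b ≤ ‖X' ω i - X'' ω i‖ ∧ ‖X' ω i - X'' ω i‖ ≤ b⁻¹})
    (θ : ℂ) (v : Fin n → ℂ) (hθv : ∀ i, ‖θ‖ * ‖v i‖ ≤ b / 10) :
    b ^ 3 * ‖θ‖ ^ 2 * ∑ i, ‖v i‖ ^ 2 ≤
      ∫ ω, ∑ i, gaussianLatticeDistSq (θ * v i * (X' ω i - X'' ω i)) ∂μ := by
  obtain ⟨hb0, hb1⟩ := hb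
  set f : Fin n → Ω → ℝ := fun i ω => gaussianLatticeDistSq (θ * v i * (X' ω i - X'' ω i))
    with hf
  have hmeas : ∀ i, Measurable (f i) := fun i =>
    measurable_gaussianLatticeDistSq.comp
      (measurable_const.mul (((measurable_pi_apply i).comp hX').sub
        ((measurable_pi_apply i).comp hX'')))
  have hint : ∀ i, Integrable (f i) μ := by
    intro i
    refine (integrable_const (1 / 2 : ℝ)).mono' (hmeas i).aestronglyMeasurable ?_
    filter_upwards with ω
    rw [Real.norm_eq_abs, abs_of_nonneg (gaussianLatticeDistSq_nonneg _)]
    exact gaussianLatticeDistSq_le _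
  rw [integral_finset_sum _ (fun i _ => hint i)]
  rw [Finset.mul_sum]
  refine Finset.sum_le_sum fun i _ => ?_
  set E := {ω | b ≤ ‖X' ω i - X'' ω i‖ ∧ ‖X' ω i - X'' ω i‖ ≤ b⁻¹} with hE
  have hEmeas : MeasurableSet E := by
    have hg : Measurable fun ω => ‖X' ω i - X'' ω i‖ :=
      (((measurable_pi_apply i).comp hX').sub ((measurable_pi_apply i).comp hX'')).norm
    exact (hg measurableSet_Ici).inter (hg measurableSet_Iic)
  set c := b ^ 2 * ‖θ‖ ^ 2 * ‖v i‖ ^ 2 with hc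
  have hpoint : ∀ ω ∈ E, c ≤ f i ω := by
    intro ω hω
    obtain ⟨h1, h2⟩ := hω
    have hnorm : ‖θ * v i * (X' ω i - X'' ω i)‖ = ‖θ‖ * ‖v i‖ * ‖X' ω i - X'' ω i‖ := by
      rw [norm_mul, norm_mul]
    have hsmall : ‖θ * v i * (X' ω i - X'' ω i)‖ < 1 / 2 := by
      rw [hnorm]
      calc ‖θ‖ * ‖v i‖ * ‖X' ω i - X'' ω i‖ ≤ (b / 10) * b⁻¹ := by
            apply mul_le_mul (hθv i) h2 (norm_nonneg _)
            positivity
        _ = 1 / 10 := by field_simp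
        _ < 1 / 2 := by norm_num
    rw [hf]
    simp only
    rw [gaussianLatticeDistSq_eq_of_small hsmall, hnorm]
    have : b * (‖θ‖ * ‖v i‖) ≤ ‖θ‖ * ‖v i‖ * ‖X' ω i - X'' ω i‖ := by
      rw [mul_comm b]
      exact mul_le_mul_of_nonneg_left h1 (by positivity)
    calc c = (b * (‖θ‖ * ‖v i‖)) ^ 2 := by ring
      _ ≤ (‖θ‖ * ‖v i‖ * ‖X' ω i - X'' ω i‖) ^ 2 := by
          apply pow_le_pow_left₀ (by positivity) this
  have hμE : b ≤ (μ E).toReal := by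
    have := ENNReal.toReal_mono (measure_ne_top μ E) (hanti i)
    rwa [ENNReal.toReal_ofReal hb0.le] at this
  have h1 : c * (μ E).toReal ≤ ∫ ω in E, f i ω ∂μ :=
    setIntegral_ge_of_const_le_real hEmeas (measure_ne_top μ E) hpoint (hint i).integrableOn
  have h2 : ∫ ω in E, f i ω ∂μ ≤ ∫ ω, f i ω ∂μ :=
    setIntegral_le_integral (hint i)
      (Filter.Eventually.of_forall fun ω => gaussianLatticeDistSq_nonneg _)
  have h3 : b ^ 3 * ‖θ‖ ^ 2 * ‖v i‖ ^ 2 ≤ c * (μ E).toReal := by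
    calc b ^ 3 * ‖θ‖ ^ 2 * ‖v i‖ ^ 2 = c * b := by ring
      _ ≤ c * (μ E).toReal := by
          apply mul_le_mul_of_nonneg_left hμE (by positivity)
  linarith
end

section
/- Let A be an invertible n×n complex matrix with rows X₁,…,Xₙ, and for each i let Uᵢ be the span of the other n−1 rows. Then Σⱼ σⱼ(A)⁻² = Σⱼ dist(Xⱼ, Uⱼ)⁻², where σ₁(A) ≥ … ≥ σₙ(A) > 0 are the singular values of A. -/
open Matrix

private theorem aux_step1 (n : ℕ) (A : Matrix (Fin n) (Fin n) ℂ) (hdet : A.det ≠ 0)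
    (hA : (Aᴴ * A).IsHermitian) :
    ∑ j, (hA.eigenvalues j)⁻¹ = ∑ j, ∑ i, ‖A⁻¹ i j‖ ^ 2 := by
  classical
  set B := A⁻¹ with hB
  have hdet' : (Aᴴ * A).det ≠ 0 := by
    rw [det_mul, det_conjTranspose]
    simpa using mul_ne_zero (star_ne_zero.2 hdet) hdet
  have heig : ∀ i, (hA.eigenvalues i : ℂ) ≠ 0 := by
    intro i hi
    apply hdet'
    rw [hA.det_eq_prod_eigenvalues]
    exact Finset.prod_eq_zero (Finset.mem_univ i) hi
  set U : Matrix (Fin n) (Fin n) ℂ := (hA.eigenvectorUnitary : Matrix (Fin n) (Fin n) ℂ) with hU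
  have hUU : star U * U = 1 := (Matrix.mem_unitaryGroup_iff').mp hA.eigenvectorUnitary.2
  have hUU' : U * star U = 1 := (Matrix.mem_unitaryGroup_iff).mp hA.eigenvectorUnitary.2
  have hdiag : star U * (Aᴴ * A) * U = diagonal (RCLike.ofReal ∘ hA.eigenvalues) :=
    by rw [← hA.conjStarAlgAut_star_eigenvectorUnitary]; exact (Unitary.conjStarAlgAut_star_apply _ _).symm
  have hUinv : U⁻¹ = star U := inv_eq_left_inv hUU
  have hUinv' : (star U)⁻¹ = U := inv_eq_left_inv hUU'
  have hdinv : (diagonal (RCLike.ofReal ∘ hA.eigenvalues))⁻¹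
      = diagonal (fun i => (hA.eigenvalues i : ℂ)⁻¹) := by
    apply inv_eq_right_inv
    rw [diagonal_mul_diagonal]
    have : (fun i => (RCLike.ofReal ∘ hA.eigenvalues) i * (hA.eigenvalues i : ℂ)⁻¹)
        = fun _ => 1 := by
      funext i; exact mul_inv_cancel₀ (heig i)
    rw [this, diagonal_one]
  have hconj : (diagonal (RCLike.ofReal ∘ hA.eigenvalues))⁻¹ = star U * (Aᴴ * A)⁻¹ * U := by
    rw [← hdiag, Matrix.mul_inv_rev, Matrix.mul_inv_rev, hUinv, hUinv', Matrix.mul_assoc]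
  have htr1 : ((Aᴴ * A)⁻¹).trace = ∑ j, (hA.eigenvalues j : ℂ)⁻¹ := by
    calc ((Aᴴ * A)⁻¹).trace = (star U * (Aᴴ * A)⁻¹ * U).trace := by
          rw [trace_mul_cycle, hUU', Matrix.one_mul]
    _ = ((diagonal (RCLike.ofReal ∘ hA.eigenvalues))⁻¹).trace := by rw [hconj]
    _ = ∑ j, (hA.eigenvalues j : ℂ)⁻¹ := by rw [hdinv, trace_diagonal]
  have htr2 : ((Aᴴ * A)⁻¹).trace = ∑ i, ∑ j, (‖B i j‖ ^ 2 : ℂ) := by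
    rw [Matrix.mul_inv_rev, ← conjTranspose_nonsing_inv, ← hB]
    simp only [trace, diag, mul_apply, conjTranspose_apply]
    congr 1; funext i; congr 1; funext j
    simp [Complex.mul_conj', Complex.mul_conj, Complex.normSq_eq_norm_sq]
  have : ((∑ j, (hA.eigenvalues j)⁻¹ : ℝ) : ℂ) = ((∑ j, ∑ i, ‖B i j‖ ^ 2 : ℝ) : ℂ) := by
    push_cast
    rw [← htr1, htr2, Finset.sum_comm]
  exact_mod_cast this

private theorem aux_step2 (n : ℕ) (A : Matrix (Fin n) (Fin n) ℂ) (hdet : A.det ≠ 0) (j : Fin n) :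
    ((Metric.infDist
        ((WithLp.equiv 2 (Fin n → ℂ)).symm (A j))
        (Submodule.span ℂ
          {x : EuclideanSpace ℂ (Fin n) |
            ∃ k : Fin n, k ≠ j ∧ x = (WithLp.equiv 2 (Fin n → ℂ)).symm (A k)})) ^ 2)⁻¹
    = ∑ i, ‖A⁻¹ i j‖ ^ 2 := by
  classical
  set e : (Fin n → ℂ) ≃ₗ[ℂ] EuclideanSpace ℂ (Fin n) :=
    (WithLp.linearEquiv 2 ℂ (Fin n → ℂ)).symm with he
  set B := A⁻¹ with hB
  set v : EuclideanSpace ℂ (Fin n) := e (fun i => star (B i j)) with hv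
  set S : Set (EuclideanSpace ℂ (Fin n)) :=
    {x | ∃ k : Fin n, k ≠ j ∧ x = (WithLp.equiv 2 (Fin n → ℂ)).symm (A k)} with hS
  set K : Submodule ℂ (EuclideanSpace ℂ (Fin n)) := Submodule.span ℂ S with hK
  have hAB : A * B = 1 := mul_nonsing_inv A (isUnit_iff_ne_zero.mpr hdet)
  -- inner products with rows
  have hinner : ∀ k : Fin n, @inner ℂ _ _ v ((WithLp.equiv 2 (Fin n → ℂ)).symm (A k))
      = if k = j then 1 else 0 := by
    intro k
    have : @inner ℂ _ _ v ((WithLp.equiv 2 (Fin n → ℂ)).symm (A k))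
        = ∑ i, (starRingEnd ℂ) (star (B i j)) * (A k i) := by
      simp [PiLp.inner_apply, hv, RCLike.inner_apply, he, WithLp.linearEquiv,
        PiLp.toLp_apply]
      exact Finset.sum_congr rfl fun _ _ => mul_comm _ _
    rw [this]
    have : ∑ i, (starRingEnd ℂ) (star (B i j)) * (A k i) = (A * B) k j := by
      simp [mul_apply, mul_comm]
    rw [this, hAB, one_apply]
  -- v is orthogonal to K
  have hv_mem : v ∈ Kᗮ := by
    rw [Submodule.mem_orthogonal']
    intro u hu
    induction hu using Submodule.span_induction with
    | mem x hx =>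
      obtain ⟨k, hk, rfl⟩ := hx
      rw [hinner k, if_neg hk]
    | zero => simp
    | add x y _ _ hx hy => rw [inner_add_right, hx, hy, add_zero]
    | smul c x _ hx => rw [inner_smul_right, hx, mul_zero]
  have hv_ne : v ≠ 0 := by
    intro h
    have := hinner j
    rw [h, if_pos rfl] at this
    simp at this
  -- linear independence of rows
  have li : LinearIndependent ℂ (fun k => A k) :=
    linearIndependent_rows_iff_isUnit.mpr ((Matrix.isUnit_iff_isUnit_det A).mpr
      (isUnit_iff_ne_zero.mpr hdet))
  have li2 : LinearIndependent ℂ (fun k => e (A k)) :=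
    li.map' e.toLinearMap e.ker
  have li3 : LinearIndependent ℂ (fun k : {k : Fin n // k ≠ j} => e (A (k : Fin n))) :=
    li2.comp _ Subtype.val_injective
  have hSrange : S = Set.range (fun k : {k : Fin n // k ≠ j} => e (A (k : Fin n))) := by
    ext x
    constructor
    · rintro ⟨k, hk, rfl⟩; exact ⟨⟨k, hk⟩, rfl⟩
    · rintro ⟨⟨k, hk⟩, rfl⟩; exact ⟨k, hk, rfl⟩
  have hfinK : Module.finrank ℂ K = n - 1 := by
    rw [hK, hSrange, finrank_span_eq_card li3]
    simp [Fintype.card_subtype_compl]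
  have hfinKo : Module.finrank ℂ Kᗮ = 1 := by
    have h1 := Submodule.finrank_add_finrank_orthogonal K
    rw [hfinK, finrank_euclideanSpace_fin] at h1
    have hn : 1 ≤ n := Nat.one_le_iff_ne_zero.mpr (fun h => (h ▸ j).elim0)
    omega
  have hspan : Submodule.span ℂ {v} = Kᗮ := by
    apply Submodule.eq_of_le_of_finrank_le
    · rw [Submodule.span_le, Set.singleton_subset_iff]; exact hv_mem
    · rw [hfinKo, finrank_span_singleton hv_ne]
  -- the projection residual
  set X : EuclideanSpace ℂ (Fin n) := (WithLp.equiv 2 (Fin n → ℂ)).symm (A j) with hX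
  set w : EuclideanSpace ℂ (Fin n) := X - (K.starProjection X : EuclideanSpace ℂ (Fin n))
    with hw
  have hw_mem : w ∈ Kᗮ := Submodule.sub_starProjection_mem_orthogonal X
  obtain ⟨c, hc⟩ : ∃ c : ℂ, w = c • v := by
    rw [← hspan] at hw_mem
    obtain ⟨c, hc⟩ := Submodule.mem_span_singleton.mp hw_mem
    exact ⟨c, hc.symm⟩
  have hvw : @inner ℂ _ _ v w = 1 := by
    rw [hw, inner_sub_right, hinner j, if_pos rfl,
      Submodule.inner_left_of_mem_orthogonal (K.starProjection_apply_mem X) hv_mem, sub_zero]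
  have hnv : ‖v‖ ≠ 0 := norm_ne_zero_iff.mpr hv_ne
  have hc_eq : c = ((‖v‖ : ℂ) ^ 2)⁻¹ := by
    have h2 : c * (‖v‖ : ℂ) ^ 2 = 1 := by
      rw [← hvw, hc, inner_smul_right, inner_self_eq_norm_sq_to_K]
      norm_cast
    exact eq_inv_of_mul_eq_one_left h2
  have hnw : ‖w‖ = ‖v‖⁻¹ := by
    rw [hc, norm_smul, hc_eq, norm_inv, norm_pow, Complex.norm_real, Real.norm_eq_abs, abs_norm]
    field_simp
  have hdist : Metric.infDist X (K : Set (EuclideanSpace ℂ (Fin n))) = ‖w‖ := by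
    rw [Metric.infDist_eq_iInf, hw, Submodule.starProjection_minimal]
    simp only [dist_eq_norm]
    rfl
  have hnormv : ‖v‖ ^ 2 = ∑ i, ‖B i j‖ ^ 2 := by
    rw [EuclideanSpace.norm_eq, Real.sq_sqrt (by positivity)]
    apply Finset.sum_congr rfl
    intro i _
    simp [hv, he, WithLp.linearEquiv, PiLp.toLp_apply]
  rw [hdist, hnw, inv_pow, inv_inv, hnormv]

/-- Negative second moment identity: for an invertible `n×n` complex matrix `A`
with singular values `σⱼ` (so `σⱼ²` are the eigenvalues of `AᴴA`) and rows
`X₁,…,Xₙ`, one has `Σⱼ σⱼ⁻² = Σⱼ dist(Xⱼ, Uⱼ)⁻²`, where `Uⱼ` is the span of the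
other `n-1` rows. -/
theorem negative_second_moment_identity
    (n : ℕ) (A : Matrix (Fin n) (Fin n) ℂ) (hdet : A.det ≠ 0)
    (hA : (Aᴴ * A).IsHermitian) :
    ∑ j, (hA.eigenvalues j)⁻¹ =
      ∑ j, ((Metric.infDist
          ((WithLp.equiv 2 (Fin n → ℂ)).symm (A j))
          (Submodule.span ℂ
            {x : EuclideanSpace ℂ (Fin n) |
              ∃ k : Fin n, k ≠ j ∧ x = (WithLp.equiv 2 (Fin n → ℂ)).symm (A k)})) ^ 2)⁻¹ := by
  rw [aux_step1 n A hdet hA]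
  exact Finset.sum_congr rfl fun j _ => (aux_step2 n A hdet j).symm
end
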